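/- Let f be a polynomial in two variables with integer coefficients, with formal partial derivatives fx and fy. Let p be a prime, k ≥ 1 an integer, and b, c integers such that p^k divides f(b,c) and such that p does not divide fx(b,c) or p does not divide fy(b,c). Then the number of pairs (i,j) with 0 ≤ i ≤ p−1 and 0 ≤ j ≤ p−1 such that p^(k+1) divides f(b + p^k·i, c + p^k·j) is exactly p. -/

import Mathlib

open MvPolynomial Finset

lemma taylor2 (b c s t : ℤ) (f : MvPolynomial (Fin 2) ℤ) :
    ∃ A B C : ℤ, MvPolynomial.eval ![b + s, c + t] f =
      MvPolynomial.eval ![b, c] f + s * MvPolynomial.eval ![b, c] (pderiv 0 f)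
        + t * MvPolynomial.eval ![b, c] (pderiv 1 f) + s ^ 2 * A + s * t * B + t ^ 2 * C := by
  induction f using MvPolynomial.induction_on with
  | C a => exact ⟨0, 0, 0, by simp⟩
  | add f g hf hg =>
    obtain ⟨A, B, C, h⟩ := hf
    obtain ⟨A', B', C', h'⟩ := hg
    refine ⟨A + A', B + B', C + C', ?_⟩
    simp only [map_add]
    linear_combination h + h'
  | mul_X f i hf =>
    obtain ⟨A, B, C, h⟩ := hf
    fin_cases i
    · refine ⟨MvPolynomial.eval ![b, c] (pderiv 0 f) + A * (b + s),
        MvPolynomial.eval ![b, c] (pderiv 1 f) + B * (b + s), C * (b + s), ?_⟩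
      simp only [map_mul, pderiv_mul, map_add, pderiv_X_self, pderiv_X_of_ne (by decide : (0:Fin 2) ≠ 1), eval_X, map_one]
      simp [Matrix.cons_val_zero]
      linear_combination (b + s) * h
    · refine ⟨A * (c + t), MvPolynomial.eval ![b, c] (pderiv 0 f) + B * (c + t),
        MvPolynomial.eval ![b, c] (pderiv 1 f) + C * (c + t), ?_⟩
      simp only [map_mul, pderiv_mul, map_add, eval_X, map_one]
      simp [pderiv_X, Matrix.cons_val_one]
      linear_combination (c + t) * h

lemma count_one (p : ℕ) (hp : p.Prime) (e u : ℤ) (hu : ¬ (p : ℤ) ∣ u) :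
    ((Finset.range p).filter (fun i : ℕ => (p : ℤ) ∣ e + (i : ℤ) * u)).card = 1 := by
  haveI := Fact.mk hp
  have hu' : (u : ZMod p) ≠ 0 := by
    rw [Ne, ZMod.intCast_zmod_eq_zero_iff_dvd]; exact hu
  set z : ZMod p := (-(e : ZMod p)) * (u : ZMod p)⁻¹ with hz
  rw [Finset.card_eq_one]
  refine ⟨z.val, ?_⟩
  ext i
  simp only [Finset.mem_filter, Finset.mem_range, Finset.mem_singleton]
  constructor
  · rintro ⟨hi, hd⟩
    have : ((e + (i : ℤ) * u : ℤ) : ZMod p) = 0 := by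
      rwa [ZMod.intCast_zmod_eq_zero_iff_dvd]
    push_cast at this
    have hi' : (i : ZMod p) = z := by
      rw [hz, eq_mul_inv_iff_mul_eq₀ hu']
      linear_combination this
    rw [← hi', ZMod.val_natCast_of_lt hi]
  · rintro rfl
    refine ⟨ZMod.val_lt z, ?_⟩
    rw [← ZMod.intCast_zmod_eq_zero_iff_dvd]
    push_cast
    rw [ZMod.natCast_val, ZMod.cast_id]
    field_simp [hz]
    rw [hz, mul_assoc, inv_mul_cancel₀ hu']; ring

theorem nondegenerate_splitting (f : MvPolynomial (Fin 2) ℤ) (p : ℕ) (hp : p.Prime)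
    (k : ℕ) (hk : 1 ≤ k) (b c : ℤ)
    (hdiv : (p : ℤ) ^ k ∣ MvPolynomial.eval ![b, c] f)
    (hunit : ¬ (p : ℤ) ∣ MvPolynomial.eval ![b, c] (MvPolynomial.pderiv 0 f) ∨
             ¬ (p : ℤ) ∣ MvPolynomial.eval ![b, c] (MvPolynomial.pderiv 1 f)) :
    ((Finset.range p ×ˢ Finset.range p).filter
        (fun ij : ℕ × ℕ => (p : ℤ) ^ (k + 1) ∣
          MvPolynomial.eval ![b + (p : ℤ) ^ k * ij.1, c + (p : ℤ) ^ k * ij.2] f)).card = p := by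
  obtain ⟨m, hm⟩ := hdiv
  set F1 := MvPolynomial.eval ![b, c] (MvPolynomial.pderiv 0 f) with hF1def
  set F2 := MvPolynomial.eval ![b, c] (MvPolynomial.pderiv 1 f) with hF2def
  have hp0 : ((p : ℤ) ^ k) ≠ 0 := pow_ne_zero _ (by exact_mod_cast hp.ne_zero)
  have key : ∀ i j : ℕ, ((p : ℤ) ^ (k + 1) ∣
      MvPolynomial.eval ![b + (p : ℤ) ^ k * i, c + (p : ℤ) ^ k * j] f) ↔
      ((p : ℤ) ∣ m + (i : ℤ) * F1 + (j : ℤ) * F2) := by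
    intro i j
    obtain ⟨A, B, C, h⟩ := taylor2 b c ((p : ℤ) ^ k * i) ((p : ℤ) ^ k * j) f
    have hpp : (p : ℤ) ^ (k + 1) ∣ (p : ℤ) ^ k * (p : ℤ) ^ k := by
      rw [← pow_add]; exact pow_dvd_pow _ (by omega)
    have h3 : (p : ℤ) ^ (k + 1) ∣ ((p : ℤ) ^ k * i) ^ 2 * A
        + (p : ℤ) ^ k * i * ((p : ℤ) ^ k * j) * B + ((p : ℤ) ^ k * j) ^ 2 * C := by
      refine dvd_add (dvd_add ?_ ?_) ?_
      · rw [show ((p : ℤ) ^ k * i) ^ 2 * A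
          = (p : ℤ) ^ k * (p : ℤ) ^ k * ((i : ℤ) ^ 2 * A) from by ring]
        exact hpp.mul_right _
      · rw [show (p : ℤ) ^ k * i * ((p : ℤ) ^ k * j) * B
          = (p : ℤ) ^ k * (p : ℤ) ^ k * ((i : ℤ) * j * B) from by ring]
        exact hpp.mul_right _
      · rw [show ((p : ℤ) ^ k * j) ^ 2 * C
          = (p : ℤ) ^ k * (p : ℤ) ^ k * ((j : ℤ) ^ 2 * C) from by ring]
        exact hpp.mul_right _
    have h2 : MvPolynomial.eval ![b + (p : ℤ) ^ k * i, c + (p : ℤ) ^ k * j] f =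
        (p : ℤ) ^ k * (m + (i : ℤ) * F1 + (j : ℤ) * F2) +
        (((p : ℤ) ^ k * i) ^ 2 * A + (p : ℤ) ^ k * i * ((p : ℤ) ^ k * j) * B
          + ((p : ℤ) ^ k * j) ^ 2 * C) := by
      rw [h, hm]; ring
    rw [h2, dvd_add_left h3, pow_succ, mul_dvd_mul_iff_left hp0]
  rw [Finset.filter_congr (fun ij _ => key ij.1 ij.2)]
  rcases hunit with hF1 | hF2
  · rw [Finset.card_filter, Finset.sum_product_right]
    have hrow : ∀ j ∈ Finset.range p,
        (∑ i ∈ Finset.range p, if (p : ℤ) ∣ m + (i : ℤ) * F1 + (j : ℤ) * F2 then 1 else 0) = 1 := by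
      intro j _
      rw [← Finset.card_filter, ← count_one p hp (m + (j : ℤ) * F2) F1 hF1]
      congr 1
      apply Finset.filter_congr
      intro i _
      rw [show m + (i : ℤ) * F1 + (j : ℤ) * F2 = (m + (j : ℤ) * F2) + (i : ℤ) * F1 from by ring]
    rw [Finset.sum_congr rfl hrow]
    simp
  · rw [Finset.card_filter, Finset.sum_product]
    have hrow : ∀ i ∈ Finset.range p,
        (∑ j ∈ Finset.range p, if (p : ℤ) ∣ m + (i : ℤ) * F1 + (j : ℤ) * F2 then 1 else 0) = 1 := by
      intro i _
      rw [← Finset.card_filter]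
      exact count_one p hp (m + (i : ℤ) * F1) F2 hF2
    rw [Finset.sum_congr rfl hrow]
    simp
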